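/- Let (ξ, ∇^ξ) be a T-equivariant Hermitian line bundle with T-invariant connection on a good T-manifold M with Killing vector field K, and let H be a T-invariant closed 3-form on M such that (∇^ξ − u ι_K + u^{-1} H)^2 + u L_K^ξ = 0. Let π: Sξ → M be the principal U(1)-bundle of ξ and let Θ be the connection 1-form on Sξ corresponding to ∇^ξ. Then ι_K Θ = 0, L_K Θ = 0, and dΘ = ι_K π*H on Sξ. -/

import Mathlib

/-!
STATEMENT 3 (Han–Mathai, "Exotic Twisted Equivariant K-Theory").

Let `(ξ, ∇^ξ)` be a `𝕋`-equivariant Hermitian line bundle with `𝕋`-invariant connection on a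
good `𝕋`-manifold `M` with Killing vector field `K`, and let `H` be a `𝕋`-invariant closed
3-form on `M` such that `(∇^ξ − u ι_K + u⁻¹ H)² + u L_K^ξ = 0`.  Let `π : Sξ → M` be the
principal `U(1)`-bundle of `ξ` and let `Θ` be the connection 1-form on `Sξ` corresponding to
`∇^ξ`.  Then `ι_K Θ = 0`, `L_K Θ = 0`, and `dΘ = ι_K π*H` on `Sξ`.

Formalization.  `SM` is the space of complex differential forms on `M` with exterior
derivative `dM` and contraction/Lie derivative `ιM, LM` along `K`; `Ω` is the space of
`ξ`-valued forms on `M`, on which scalar forms act by wedge product via the injective map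
`act`, and which carries the connection `N = ∇^ξ` and the operators `ι = ι_K`, `L = L_K^ξ`.
The flatness hypothesis is stated in Laurent polynomials in the degree-2 indeterminate `u`
(the variable `T 1`) with operator coefficients, together with the standard graded
commutation rules.  `SP` is the space of forms on `Sξ`, with exterior derivative `dP` and
the operators `ιPK, LPK` along the lifted Killing vector field `K`; `pull = π*` intertwines
the calculi.  The hypotheses `hcurv` and `hmom` record the standard principal-bundle facts
relating the connection 1-form `Θ` of `(ξ, ∇^ξ)` to the curvature `(∇^ξ)²` and to the moment
`μ^ξ_K = L_K^ξ − [∇^ξ, ι_K]` of the connection: `dΘ` is the pullback of the curvature 2-form,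
and `ι_K Θ` is (minus) the pullback of the moment function.
-/

open LaurentPolynomial

theorem stmt3
    -- scalar forms on `M`
    (SM : Type) [AddCommGroup SM] [Module ℂ SM]
    (dM ιM LM : Module.End ℂ SM)
    -- `ξ`-valued forms on `M`, wedge action, connection, contraction, Lie derivative
    (Ω : Type) [AddCommGroup Ω] [Module ℂ Ω]
    (act : SM →ₗ[ℂ] Module.End ℂ Ω) (act_inj : Function.Injective act)
    (N ι L : Module.End ℂ Ω)
    -- the `𝕋`-invariant closed 3-form `H`
    (H : SM) (hHcl : dM H = 0) (hHinv : LM H = 0)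
    -- graded commutation rules on `ξ`-valued forms
    (hι2 : ι * ι = 0)
    (hH2 : act H * act H = 0)
    (hdH : N * act H + act H * N = act (dM H))
    (hιH : ι * act H + act H * ι = act (ιM H))
    -- equivariant flatness `(∇^ξ − u ι_K + u⁻¹ H)² + u L_K^ξ = 0`
    (hflat : (C N - C ι * T 1 + C (act H) * T (-1)) ^ 2 + C L * T 1 = 0)
    -- forms on the circle bundle `Sξ`, with the lifted `K`-operators
    (SP : Type) [AddCommGroup SP] [Module ℂ SP]
    (dP ιPK LPK : Module.End ℂ SP)
    (hιPK2 : ιPK * ιPK = 0)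
    (cartanP : dP * ιPK + ιPK * dP = LPK)
    -- pullback `π*` intertwines the calculi on `M` and on `Sξ`
    (pull : SM →ₗ[ℂ] SP)
    (hpull_d : ∀ ω : SM, pull (dM ω) = dP (pull ω))
    (hpull_ι : ∀ ω : SM, pull (ιM ω) = ιPK (pull ω))
    -- the connection 1-form `Θ` on `Sξ` of `(ξ, ∇^ξ)`:
    (Θ : SP)
    -- its exterior derivative is the pullback of the curvature 2-form of `∇^ξ`
    (hcurv : ∀ F : SM, N * N = act F → dP Θ = pull F)
    -- its contraction with `K` is the pullback of the moment of `∇^ξ` along `K`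
    (hmom : ∀ f : SM, L - (N * ι + ι * N) = act f → ιPK Θ = pull f) :
    -- conclusions: `ι_K Θ = 0`, `L_K Θ = 0`, and `dΘ = ι_K π*H`
    ιPK Θ = 0 ∧ LPK Θ = 0 ∧ dP Θ = ιPK (pull H) := by
  classical
  -- Extract the Laurent coefficients of the flatness equation.
  have hCs : ∀ a : Module.End ℂ Ω, (C a : (Module.End ℂ Ω)[T;T⁻¹]) = AddMonoidAlgebra.single 0 a :=
    fun a => by rw [single_eq_C_mul_T, T_zero, mul_one]
  have h := hflat
  rw [sq] at h
  simp only [← single_eq_C_mul_T] at h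
  simp only [hCs] at h
  simp only [add_mul, sub_mul, mul_add, mul_sub, AddMonoidAlgebra.single_mul_single] at h
  have h2 : (AddMonoidAlgebra.single ((0:ℤ)+0) (N*N) - AddMonoidAlgebra.single (1+0) (ι*N)
      + AddMonoidAlgebra.single (-1+0) (act H*N)
      - (AddMonoidAlgebra.single (0+1) (N*ι) - AddMonoidAlgebra.single (1+1) (ι*ι) + AddMonoidAlgebra.single (-1+1) (act H*ι))
      + (AddMonoidAlgebra.single (0+-1) (N*act H) - AddMonoidAlgebra.single (1+-1) (ι*act H)
          + AddMonoidAlgebra.single (-1+-1) (act H*act H))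
      + AddMonoidAlgebra.single 1 L : (Module.End ℂ Ω)[T;T⁻¹]) = 0 := h
  have h1 := congrArg (fun p => AddMonoidAlgebra.coeff p 1) h2
  have h0 := congrArg (fun p => AddMonoidAlgebra.coeff p 0) h2
  simp only [AddMonoidAlgebra.coeff_add, AddMonoidAlgebra.coeff_sub, AddMonoidAlgebra.coeff_single,
    AddMonoidAlgebra.coeff_zero, Finsupp.add_apply, Finsupp.sub_apply, Finsupp.single_apply, Finsupp.coe_zero,
    Pi.zero_apply, Int.reduceAdd, Int.reduceNeg, reduceIte, zero_sub, sub_zero, add_zero,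
    zero_add, neg_zero, sub_neg_eq_add] at h1 h0
  norm_num at h1 h0
  -- coefficient of `u`: the moment vanishes
  have hmom0 : L - (N * ι + ι * N) = act 0 := by
    rw [map_zero]
    linear_combination (norm := noncomm_ring) h1
  have hι0 : ιPK Θ = 0 := by rw [hmom 0 hmom0, map_zero]
  -- coefficient of `u⁰`: the curvature is `ι_K H`
  have hcurv0 : N * N = act (ιM H) := by
    rw [← hιH]
    linear_combination (norm := noncomm_ring) h0
  have hd : dP Θ = ιPK (pull H) := by rw [hcurv (ιM H) hcurv0, hpull_ι]
  refine ⟨hι0, ?_, hd⟩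
  have : LPK Θ = dP (ιPK Θ) + ιPK (dP Θ) := by
    rw [← cartanP]; rfl
  rw [this, hι0, map_zero, hd, zero_add]
  have : ιPK (ιPK (pull H)) = (ιPK * ιPK) (pull H) := rfl
  rw [this, hιPK2]
  rfl
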